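/- Let α : ℝ → ℝ be defined by α(x) = arcsin((1-2x)/√5) + arcsin((1+2x)/√5) + 2·arctan(2) - π. Then α is monotone increasing on the interval [0, 1/2], and consequently α(x) ≤ 3·arctan(2) - π for every x in [-1/2, 1/2]. -/

import Mathlib

open Real Set

lemma alpha_aux_sqrt5 : (2:ℝ) < Real.sqrt 5 := by
  have : Real.sqrt 4 < Real.sqrt 5 := Real.sqrt_lt_sqrt (by norm_num) (by norm_num)
  calc (2:ℝ) = Real.sqrt 4 := by
        rw [show (4:ℝ) = 2^2 by norm_num, Real.sqrt_sq (by norm_num)]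
    _ < Real.sqrt 5 := this

theorem alpha_monotone_and_bound (α : ℝ → ℝ)
    (hα : ∀ x, α x = Real.arcsin ((1 - 2*x) / Real.sqrt 5) + Real.arcsin ((1 + 2*x) / Real.sqrt 5)
        + 2 * Real.arctan 2 - Real.pi) :
    MonotoneOn α (Set.Icc (0:ℝ) (1/2)) ∧
      ∀ x ∈ Set.Icc (-(1:ℝ)/2) (1/2), α x ≤ 3 * Real.arctan 2 - Real.pi := by
  have hs2 : (2:ℝ) < Real.sqrt 5 := alpha_aux_sqrt5
  have hs : (0:ℝ) < Real.sqrt 5 := by linarith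
  have h5 : Real.sqrt 5 ^ 2 = 5 := Real.sq_sqrt (by norm_num)
  -- derivative facts
  have hderiv : ∀ x ∈ Ioo (0:ℝ) (1/2), HasDerivAt α
      ((-2 / Real.sqrt 5) * (1 / Real.sqrt (1 - ((1 - 2*x)/Real.sqrt 5)^2))
        + (2 / Real.sqrt 5) * (1 / Real.sqrt (1 - ((1 + 2*x)/Real.sqrt 5)^2))) x := by
    intro x hx
    obtain ⟨hx0, hx1⟩ := hx
    set u := (1 - 2*x)/Real.sqrt 5 with hu
    set v := (1 + 2*x)/Real.sqrt 5 with hv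
    have hu0 : 0 ≤ u := by
      apply div_nonneg _ hs.le; linarith
    have hu1 : u < 1 := by
      rw [hu, div_lt_one hs]; linarith
    have hv0 : 0 < v := by
      apply div_pos _ hs; linarith
    have hv1 : v < 1 := by
      rw [hv, div_lt_one hs]; linarith
    have hdu : HasDerivAt (fun x : ℝ => (1 - 2*x)/Real.sqrt 5) (-2/Real.sqrt 5) x := by
      have : HasDerivAt (fun x : ℝ => (1 - 2*x)) (-2) x := by
        exact (((hasDerivAt_id x).const_mul (2:ℝ)).const_sub 1).congr_deriv (by norm_num)
      simpa [div_eq_mul_inv] using this.mul_const (Real.sqrt 5)⁻¹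
    have hdv : HasDerivAt (fun x : ℝ => (1 + 2*x)/Real.sqrt 5) (2/Real.sqrt 5) x := by
      have : HasDerivAt (fun x : ℝ => (1 + 2*x)) 2 x := by
        simpa using ((hasDerivAt_id x).const_mul (2:ℝ)).const_add 1
      simpa [div_eq_mul_inv] using this.mul_const (Real.sqrt 5)⁻¹
    have hau : HasDerivAt (fun x : ℝ => Real.arcsin ((1 - 2*x)/Real.sqrt 5))
        ((1 / Real.sqrt (1 - u^2)) * (-2/Real.sqrt 5)) x := by
      exact (Real.hasDerivAt_arcsin (by linarith) (by linarith)).comp x hdu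
    have hav : HasDerivAt (fun x : ℝ => Real.arcsin ((1 + 2*x)/Real.sqrt 5))
        ((1 / Real.sqrt (1 - v^2)) * (2/Real.sqrt 5)) x := by
      exact (Real.hasDerivAt_arcsin (by linarith) (by linarith)).comp x hdv
    have := ((hau.add hav).add_const (2 * Real.arctan 2)).sub_const Real.pi
    have heq : α = fun x => (Real.arcsin ((1 - 2*x)/Real.sqrt 5)
        + Real.arcsin ((1 + 2*x)/Real.sqrt 5) + 2 * Real.arctan 2) - Real.pi := by
      funext y; rw [hα y]
    rw [heq]
    exact this.congr_deriv (by ring)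
  have mono : MonotoneOn α (Icc (0:ℝ) (1/2)) := by
    have hint : interior (Icc (0:ℝ) (1/2)) = Ioo (0:ℝ) (1/2) := interior_Icc
    apply monotoneOn_of_deriv_nonneg (convex_Icc _ _)
    · -- continuity
      have : Continuous α := by
        have heq : α = fun x => (Real.arcsin ((1 - 2*x)/Real.sqrt 5)
            + Real.arcsin ((1 + 2*x)/Real.sqrt 5) + 2 * Real.arctan 2) - Real.pi := by
          funext y; rw [hα y]
        rw [heq]
        apply Continuous.sub _ continuous_const
        apply Continuous.add _ continuous_const
        exact (Real.continuous_arcsin.comp (by continuity)).add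
          (Real.continuous_arcsin.comp (by continuity))
      exact this.continuousOn
    · intro x hx
      rw [hint] at hx
      exact ((hderiv x hx).differentiableAt).differentiableWithinAt
    · intro x hx
      rw [hint] at hx
      rw [(hderiv x hx).deriv]
      obtain ⟨hx0, hx1⟩ := hx
      set u := (1 - 2*x)/Real.sqrt 5 with hu
      set v := (1 + 2*x)/Real.sqrt 5 with hv
      have hu0 : 0 ≤ u := div_nonneg (by linarith) hs.le
      have huv : u ≤ v := by
        rw [hu, hv]; exact (div_le_div_iff_of_pos_right hs).mpr (by linarith)
      have hv1 : v < 1 := by rw [hv, div_lt_one hs]; linarith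
      have hv2 : 0 < 1 - v^2 := by nlinarith
      have hle : 1 - v^2 ≤ 1 - u^2 := by nlinarith
      have hsv : 0 < Real.sqrt (1 - v^2) := Real.sqrt_pos.2 hv2
      have hsu : 0 < Real.sqrt (1 - u^2) := Real.sqrt_pos.2 (lt_of_lt_of_le hv2 hle)
      have hsle : Real.sqrt (1 - v^2) ≤ Real.sqrt (1 - u^2) := Real.sqrt_le_sqrt hle
      have hinv : 1 / Real.sqrt (1 - u^2) ≤ 1 / Real.sqrt (1 - v^2) :=
        one_div_le_one_div_of_le hsv hsle
      have hc : 0 < 2 / Real.sqrt 5 := by positivity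
      have : (-2 / Real.sqrt 5) * (1 / Real.sqrt (1 - u^2))
          = -((2 / Real.sqrt 5) * (1 / Real.sqrt (1 - u^2))) := by ring
      rw [this]
      have := mul_le_mul_of_nonneg_left hinv hc.le
      linarith
  refine ⟨mono, ?_⟩
  intro x hx
  obtain ⟨hx1, hx2⟩ := hx
  have hsym : α x = α |x| := by
    rcases abs_cases x with ⟨h, _⟩ | ⟨h, _⟩
    · rw [h]
    · rw [hα x, hα |x|, h]
      have e1 : 1 - 2 * -x = 1 + 2*x := by ring
      have e2 : 1 + 2 * -x = 1 - 2*x := by ring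
      rw [e1, e2]; ring
  have hmem : |x| ∈ Icc (0:ℝ) (1/2) := ⟨abs_nonneg x, abs_le.2 ⟨by linarith, hx2⟩⟩
  have hhalf : (1/2 : ℝ) ∈ Icc (0:ℝ) (1/2) := by norm_num
  have hle : α |x| ≤ α (1/2) := mono hmem hhalf hmem.2
  have hval : α (1/2) = 3 * Real.arctan 2 - Real.pi := by
    rw [hα]
    have e1 : (1 - 2 * (1/2 : ℝ)) / Real.sqrt 5 = 0 := by norm_num
    have e2 : (1 + 2 * (1/2 : ℝ)) / Real.sqrt 5 = 2 / Real.sqrt 5 := by norm_num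
    rw [e1, e2, Real.arcsin_zero]
    have : Real.arctan 2 = Real.arcsin (2 / Real.sqrt 5) := by
      rw [Real.arctan_eq_arcsin]; norm_num
    rw [← this]; ring
  rw [hsym]
  linarith
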